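/- A priori sandwich bounds: Let S be a causal bivariate function (S(t,t) = 0, non-decreasing in second argument), d > 0 an integer, w > 0 real, and S_win = (S ⊗ δ_d ⊗ δ^{+w})* ⊗ S. Let S' be the corresponding equivalent service process with parameters d' = 1 and w' = w/d. Then for all 0 ≤ s ≤ t: S'(s,t) ≤ S_win(s,t) ≤ min{ S(s,t), ⌈(t−s)/d⌉ · w }. -/

import Mathlib

open scoped ENNReal NNReal

/-- Min-plus convolution of bivariate functions. -/
noncomputable def conv (f g : ℕ → ℕ → ℝ≥0∞) : ℕ → ℕ → ℝ≥0∞ :=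
  fun s t => ⨅ τ ∈ Finset.Icc s t, f s τ + g τ t

/-- The neutral element δ : δ(s,t)=0 if s ≥ t, ∞ otherwise. -/
noncomputable def delta : ℕ → ℕ → ℝ≥0∞ := fun s t => if t ≤ s then 0 else ∞

/-- n-fold self-convolution: f^(0) = δ, f^(n+1) = f^(n) ⊗ f. -/
noncomputable def convPow (f : ℕ → ℕ → ℝ≥0∞) : ℕ → ℕ → ℕ → ℝ≥0∞
  | 0 => delta
  | n + 1 => conv (convPow f n) f

/-- Subadditive subClosure f* = inf over n of f^(n). -/
noncomputable def subClosure (f : ℕ → ℕ → ℝ≥0∞) : ℕ → ℕ → ℝ≥0∞ :=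
  fun s t => ⨅ n : ℕ, convPow f n s t

/-- Delay element: δ_d(s,t) = 0 if s ≥ t − d, ∞ otherwise. -/
noncomputable def deltaD (d : ℕ) : ℕ → ℕ → ℝ≥0∞ := fun s t => if t ≤ s + d then 0 else ∞

/-- Window element: δ^{+w}(s,t) = w if s ≥ t, ∞ otherwise. -/
noncomputable def deltaW (w : ℝ≥0∞) : ℕ → ℕ → ℝ≥0∞ := fun s t => if t ≤ s then w else ∞
lemma conv_le (f g : ℕ → ℕ → ℝ≥0∞) {s t τ : ℕ} (h1 : s ≤ τ) (h2 : τ ≤ t) :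
    conv f g s t ≤ f s τ + g τ t :=
  iInf₂_le τ (Finset.mem_Icc.mpr ⟨h1, h2⟩)

lemma le_conv {f g : ℕ → ℕ → ℝ≥0∞} {s t : ℕ} {x : ℝ≥0∞}
    (h : ∀ τ, s ≤ τ → τ ≤ t → x ≤ f s τ + g τ t) : x ≤ conv f g s t :=
  le_iInf₂ fun τ hτ => h τ (Finset.mem_Icc.mp hτ).1 (Finset.mem_Icc.mp hτ).2

lemma subClosure_le (f : ℕ → ℕ → ℝ≥0∞) (n s t : ℕ) :
    subClosure f s t ≤ convPow f n s t := iInf_le _ n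

lemma convPow_add_le (g : ℕ → ℕ → ℝ≥0∞) (a b : ℕ) :
    ∀ {s τ t : ℕ}, s ≤ τ → τ ≤ t →
      convPow g (a + b) s t ≤ convPow g a s τ + convPow g b τ t := by
  induction b with
  | zero =>
    intro s τ t h1 h2
    rcases eq_or_lt_of_le h2 with rfl | h
    · simp [convPow, delta]
    · simp [convPow, delta, Nat.not_le.mpr h]
  | succ b ih =>
    intro s τ t h1 h2
    have hr : convPow g a s τ + convPow g (b + 1) τ t
        = ⨅ σ ∈ Finset.Icc τ t, (convPow g a s τ + (convPow g b τ σ + g σ t)) := by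
      show convPow g a s τ + ⨅ σ ∈ Finset.Icc τ t, (convPow g b τ σ + g σ t) = _
      rw [ENNReal.add_iInf]
      exact iInf_congr fun σ => by rw [ENNReal.add_iInf]
    rw [hr]
    refine le_iInf₂ fun σ hσ => ?_
    rcases Finset.mem_Icc.mp hσ with ⟨hσ1, hσ2⟩
    calc convPow g (a + (b + 1)) s t
        = conv (convPow g (a + b)) g s t := rfl
      _ ≤ convPow g (a + b) s σ + g σ t := conv_le _ _ (h1.trans hσ1) hσ2
      _ ≤ (convPow g a s τ + convPow g b τ σ) + g σ t :=
          add_le_add (ih h1 hσ1) le_rfl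
      _ = convPow g a s τ + (convPow g b τ σ + g σ t) := add_assoc _ _ _

/-- Upper bound on one window step when the gap is at most `d`. -/
lemma g_ub0 (S : ℕ → ℕ → ℝ≥0∞) (hScausal : ∀ t, S t t = 0) (d : ℕ) (w : ℝ≥0∞)
    {s u : ℕ} (hsu : s ≤ u) (h : u ≤ s + d) :
    conv (conv S (deltaD d)) (deltaW w) s u ≤ w := by
  calc conv (conv S (deltaD d)) (deltaW w) s u
      ≤ conv S (deltaD d) s u + deltaW w u u := conv_le _ _ hsu le_rfl
    _ ≤ (S s s + deltaD d s u) + deltaW w u u :=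
        add_le_add (conv_le _ _ le_rfl hsu) le_rfl
    _ = w := by simp [hScausal, deltaD, deltaW, h]

/-- Upper bound on one window step when the gap exceeds `d`. -/
lemma g_ub (S : ℕ → ℕ → ℝ≥0∞) (d : ℕ) (w : ℝ≥0∞) {s u : ℕ} (h : s + d ≤ u) :
    conv (conv S (deltaD d)) (deltaW w) s u ≤ S s (u - d) + w := by
  have hsu : s ≤ u := le_trans (Nat.le_add_right s d) h
  calc conv (conv S (deltaD d)) (deltaW w) s u
      ≤ conv S (deltaD d) s u + deltaW w u u := conv_le _ _ hsu le_rfl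
    _ ≤ (S s (u - d) + deltaD d (u - d) u) + deltaW w u u :=
        add_le_add (conv_le _ _ (by omega) (by omega)) le_rfl
    _ = S s (u - d) + w := by
        have h' : u ≤ u - d + d := by omega
        simp [deltaD, deltaW, h']

/-- Lower bound `w` on one window step. -/
lemma g_lb_w (S : ℕ → ℕ → ℝ≥0∞) (d : ℕ) (w : ℝ≥0∞) (s t : ℕ) :
    w ≤ conv (conv S (deltaD d)) (deltaW w) s t := by
  refine le_conv fun τ _ _ => ?_
  refine le_trans ?_ le_add_self
  unfold deltaW
  split <;> simp

/-- Lower bound `S s (t - d) + w` on one window step. -/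
lemma g_lb (S : ℕ → ℕ → ℝ≥0∞) (hS : ∀ s, Monotone (S s)) (d : ℕ) (w : ℝ≥0∞) (s t : ℕ) :
    S s (t - d) + w ≤ conv (conv S (deltaD d)) (deltaW w) s t := by
  refine le_conv fun σ hσ1 hσ2 => ?_
  by_cases hσ : t ≤ σ
  · have hst : σ = t := le_antisymm hσ2 hσ
    subst hst
    have hW : deltaW w σ σ = w := by simp [deltaW]
    rw [hW]
    refine add_le_add ?_ le_rfl
    refine le_conv fun ρ hρ1 hρ2 => ?_
    by_cases hρ : σ ≤ ρ + d
    · have h0 : deltaD d ρ σ = 0 := by simp [deltaD, hρ]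
      rw [h0, add_zero]
      exact hS s (by omega)
    · have h0 : deltaD d ρ σ = ∞ := by simp [deltaD, hρ]
      rw [h0, add_top]; exact le_top
  · have h0 : deltaW w σ t = ∞ := by simp [deltaW, hσ]
    rw [h0, add_top]; exact le_top

/-- Speed bound: `k` window steps cover at most `k*d` time and cost at most `k*w`. -/
lemma speed (S : ℕ → ℕ → ℝ≥0∞) (hScausal : ∀ t, S t t = 0) (d : ℕ) (w : ℝ≥0∞) :
    ∀ k s u, s ≤ u → u ≤ s + k * d →
    convPow (conv (conv S (deltaD d)) (deltaW w)) k s u ≤ (k : ℝ≥0∞) * w := by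
  intro k
  induction k with
  | zero =>
    intro s u h1 h2
    have : u = s := by omega
    subst this
    simp [convPow, delta]
  | succ k ih =>
    intro s u h1 h2
    set τ := min u (s + k * d) with hτ
    have hsτ : s ≤ τ := le_min h1 (Nat.le_add_right _ _)
    have hτu : τ ≤ u := min_le_left _ _
    calc convPow (conv (conv S (deltaD d)) (deltaW w)) (k + 1) s u
        ≤ convPow (conv (conv S (deltaD d)) (deltaW w)) k s τ
            + conv (conv S (deltaD d)) (deltaW w) τ u := conv_le _ _ hsτ hτu
      _ ≤ (k : ℝ≥0∞) * w + w := by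
          refine add_le_add (ih s τ hsτ (min_le_right _ _))
            (g_ub0 S hScausal d w hτu ?_)
          have hmul : (k + 1) * d = k * d + d := by ring
          omega
      _ = ((k + 1 : ℕ) : ℝ≥0∞) * w := by push_cast; ring

/-- Key lemma: `d` steps of the `(1, w/d)` window refine one `(d, w)` window step. -/
lemma key (S : ℕ → ℕ → ℝ≥0∞) (hS : ∀ s, Monotone (S s)) (hScausal : ∀ t, S t t = 0)
    (d : ℕ) (hd : 0 < d) (w : ℝ≥0) {s t : ℕ} (hst : s ≤ t) :
    convPow (conv (conv S (deltaD 1)) (deltaW ((w / (d : ℝ≥0) : ℝ≥0) : ℝ≥0∞))) d s t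
      ≤ conv (conv S (deltaD d)) (deltaW (w : ℝ≥0∞)) s t := by
  set w' : ℝ≥0 := w / (d : ℝ≥0) with hw'
  have hdw : (d : ℝ≥0∞) * (w' : ℝ≥0∞) = (w : ℝ≥0∞) := by
    have hd0 : (d : ℝ≥0) ≠ 0 := by positivity
    rw [show ((d : ℕ) : ℝ≥0∞) = (((d : ℕ) : ℝ≥0) : ℝ≥0∞) by push_cast; rfl,
      ← ENNReal.coe_mul]
    congr 1
    rw [hw', mul_div_cancel₀ _ hd0]
  by_cases hcase : t ≤ s + d
  · calc convPow (conv (conv S (deltaD 1)) (deltaW (w' : ℝ≥0∞))) d s t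
        ≤ (d : ℝ≥0∞) * (w' : ℝ≥0∞) :=
          speed S hScausal 1 (w' : ℝ≥0∞) d s t hst (by omega)
      _ = (w : ℝ≥0∞) := hdw
      _ ≤ _ := g_lb_w S d _ s t
  · push_neg at hcase
    set τ := t - d + 1 with hτdef
    have h1 : s ≤ τ := by omega
    have h2 : τ ≤ t := by omega
    have hsplit := convPow_add_le (conv (conv S (deltaD 1)) (deltaW (w' : ℝ≥0∞))) 1 (d - 1) h1 h2
    rw [show 1 + (d - 1) = d by omega] at hsplit
    refine le_trans hsplit ?_
    have hA : convPow (conv (conv S (deltaD 1)) (deltaW (w' : ℝ≥0∞))) 1 s τ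
        ≤ S s (t - d) + (w' : ℝ≥0∞) := by
      calc convPow (conv (conv S (deltaD 1)) (deltaW (w' : ℝ≥0∞))) 1 s τ
          ≤ delta s s + conv (conv S (deltaD 1)) (deltaW (w' : ℝ≥0∞)) s τ :=
            conv_le _ _ le_rfl h1
        _ = conv (conv S (deltaD 1)) (deltaW (w' : ℝ≥0∞)) s τ := by simp [delta]
        _ ≤ S s (τ - 1) + (w' : ℝ≥0∞) := g_ub S 1 _ (by omega)
        _ = S s (t - d) + (w' : ℝ≥0∞) := by rw [show τ - 1 = t - d by omega]
    have hB : convPow (conv (conv S (deltaD 1)) (deltaW (w' : ℝ≥0∞))) (d - 1) τ t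
        ≤ ((d - 1 : ℕ) : ℝ≥0∞) * (w' : ℝ≥0∞) :=
      speed S hScausal 1 (w' : ℝ≥0∞) (d - 1) τ t h2 (by omega)
    calc _ ≤ (S s (t - d) + (w' : ℝ≥0∞)) + ((d - 1 : ℕ) : ℝ≥0∞) * (w' : ℝ≥0∞) :=
          add_le_add hA hB
      _ = S s (t - d) + (w : ℝ≥0∞) := by
          rw [add_assoc]
          congr 1
          have e1 : (w' : ℝ≥0∞) + ((d - 1 : ℕ) : ℝ≥0∞) * (w' : ℝ≥0∞)
              = ((1 + (d - 1) : ℕ) : ℝ≥0∞) * (w' : ℝ≥0∞) := by push_cast; ring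
          rw [e1, show 1 + (d - 1) = d from by omega, hdw]
      _ ≤ _ := g_lb S hS d _ s t

/-- The closure of the refined window is below every power of the coarse window. -/
lemma closure_le (S : ℕ → ℕ → ℝ≥0∞) (hS : ∀ s, Monotone (S s)) (hScausal : ∀ t, S t t = 0)
    (d : ℕ) (hd : 0 < d) (w : ℝ≥0) :
    ∀ n s t, subClosure (conv (conv S (deltaD 1)) (deltaW ((w / (d : ℝ≥0) : ℝ≥0) : ℝ≥0∞))) s t
      ≤ convPow (conv (conv S (deltaD d)) (deltaW (w : ℝ≥0∞))) n s t := by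
  intro n
  induction n with
  | zero => intro s t; exact subClosure_le _ 0 s t
  | succ n ih =>
    intro s t
    refine le_conv fun τ h1 h2 => ?_
    refine le_trans ?_ (add_le_add (ih s τ) (key S hS hScausal d hd w h2))
    rw [show subClosure (conv (conv S (deltaD 1)) (deltaW ((w / (d : ℝ≥0) : ℝ≥0) : ℝ≥0∞))) s τ
          + convPow (conv (conv S (deltaD 1)) (deltaW ((w / (d : ℝ≥0) : ℝ≥0) : ℝ≥0∞))) d τ t
        = ⨅ m : ℕ, (convPow (conv (conv S (deltaD 1)) (deltaW ((w / (d : ℝ≥0) : ℝ≥0) : ℝ≥0∞))) m s τ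
          + convPow (conv (conv S (deltaD 1)) (deltaW ((w / (d : ℝ≥0) : ℝ≥0) : ℝ≥0∞))) d τ t)
        from ENNReal.iInf_add]
    refine le_iInf fun m => ?_
    exact le_trans (subClosure_le _ (m + d) s t) (convPow_add_le _ m d h1 h2)

lemma ceil_cover (m d : ℕ) (hd : 0 < d) : m ≤ (m + d - 1) / d * d := by
  rw [Nat.mul_comm]
  have h1 := Nat.div_add_mod (m + d - 1) d
  have h2 := Nat.mod_lt (m + d - 1) hd
  generalize d * ((m + d - 1) / d) = p at h1 ⊢
  generalize (m + d - 1) % d = r at h1 h2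
  omega

/-- a priori sandwich bounds on the equivalent service process
S_win = (S ⊗ δ_d ⊗ δ^{+w})* ⊗ S: with S' the equivalent service process for
d' = 1 and w' = w/d, S' ≤ S_win ≤ min{S, ⌈(t−s)/d⌉ w}. -/
theorem apriori_sandwich (S : ℕ → ℕ → ℝ≥0∞) (hS : ∀ s, Monotone (S s))
    (hScausal : ∀ t, S t t = 0) (d : ℕ) (hd : 0 < d) (w : ℝ≥0) (hw : 0 < w) :
    ∀ s t : ℕ, s ≤ t →
      conv (subClosure (conv (conv S (deltaD 1)) (deltaW ((w / (d : ℝ≥0) : ℝ≥0) : ℝ≥0∞)))) S s t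
        ≤ conv (subClosure (conv (conv S (deltaD d)) (deltaW (w : ℝ≥0∞)))) S s t ∧
      conv (subClosure (conv (conv S (deltaD d)) (deltaW (w : ℝ≥0∞)))) S s t
        ≤ min (S s t) (((t - s + d - 1) / d : ℕ) * (w : ℝ≥0∞)) := by
  intro s t hst
  constructor
  · -- S' ≤ S_win
    refine le_conv fun τ h1 h2 => ?_
    refine le_trans (conv_le _ _ h1 h2) (add_le_add ?_ le_rfl)
    refine le_iInf fun n => ?_
    exact closure_le S hS hScausal d hd w n s τ
  · refine le_min ?_ ?_
    · -- ≤ S s t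
      calc conv (subClosure (conv (conv S (deltaD d)) (deltaW (w : ℝ≥0∞)))) S s t
          ≤ subClosure (conv (conv S (deltaD d)) (deltaW (w : ℝ≥0∞))) s s + S s t :=
            conv_le _ _ le_rfl hst
        _ ≤ delta s s + S s t := add_le_add (subClosure_le _ 0 s s) le_rfl
        _ = S s t := by simp [delta]
    · -- ≤ ⌈(t-s)/d⌉ * w
      set n := (t - s + d - 1) / d with hn
      have hcov : t ≤ s + n * d := by
        have h3 := ceil_cover (t - s) d hd
        rw [← hn] at h3
        omega
      calc conv (subClosure (conv (conv S (deltaD d)) (deltaW (w : ℝ≥0∞)))) S s t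
          ≤ subClosure (conv (conv S (deltaD d)) (deltaW (w : ℝ≥0∞))) s t + S t t :=
            conv_le _ _ hst le_rfl
        _ = subClosure (conv (conv S (deltaD d)) (deltaW (w : ℝ≥0∞))) s t := by
            simp [hScausal]
        _ ≤ convPow (conv (conv S (deltaD d)) (deltaW (w : ℝ≥0∞))) n s t :=
            subClosure_le _ n s t
        _ ≤ (n : ℝ≥0∞) * (w : ℝ≥0∞) := speed S hScausal d (w : ℝ≥0∞) n s t hst hcov
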